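/- If A is an infinite c.e. set, then Σ_{x ∈ A} c̲_K(x) = ∞, where c̲_K(x) = Σ_{w > x} 2^{-K(w)} is the limit of the standard cost function. -/

import Mathlib

/-- The limit `c̲_K(x) = Σ_{w > x} 2^{-K(w)}` of the standard cost function. -/
noncomputable def cKbar (K : ℕ → ℕ) (x : ℕ) : ℝ :=
  ∑' w : ℕ, if x < w then ((2 : ℝ)⁻¹) ^ K w else 0

section Aux

open Finset

/-- A discrete rearrangement inequality: pairing an antitone sequence with a
permutation of `{0, …, N-1}` is minimized by the identity pairing. -/
lemma rearrange_min (w : ℕ → ℝ)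
    (hmono : ∀ i j : ℕ, i ≤ j → w j ≤ w i) :
    ∀ (N : ℕ) (c : ℕ → ℕ), (∀ i, i < N → c i < N) →
      (∀ i, i < N → ∀ j, j < N → c i = c j → i = j) →
      ∑ i ∈ Finset.range N, w i * i ≤ ∑ i ∈ Finset.range N, w i * c i := by
  intro N
  induction N with
  | zero => intro c _ _; simp
  | succ N ih =>
    intro c hlt hinj
    obtain ⟨i0, hi0mem, hi0⟩ :=
      Finset.surj_on_of_inj_on_of_card_le (s := Finset.range (N+1)) (t := Finset.range (N+1))
        (fun a _ => c a) (fun a ha => Finset.mem_range.2 (hlt a (Finset.mem_range.1 ha)))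
        (fun a₁ a₂ h₁ h₂ he => hinj a₁ (Finset.mem_range.1 h₁) a₂ (Finset.mem_range.1 h₂) he)
        le_rfl N (Finset.mem_range.2 (Nat.lt_succ_self N))
    have hi0le : i0 ≤ N := Nat.lt_succ_iff.1 (Finset.mem_range.1 hi0mem)
    have hci0 : c i0 = N := hi0.symm
    rw [Finset.sum_range_succ, Finset.sum_range_succ]
    rcases eq_or_lt_of_le hi0le with heq | hlt0
    · -- i0 = N : c N = N, c restricted to range N works
      have hcN : c N = N := by simpa [heq] using hci0
      have h1 : ∀ i, i < N → c i < N := by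
        intro i hi
        have := hlt i (Nat.lt_succ_of_lt hi)
        rcases Nat.lt_succ_iff_lt_or_eq.1 this with h | h
        · exact h
        · exact absurd (hinj i (Nat.lt_succ_of_lt hi) N (Nat.lt_succ_self _) (h.trans hcN.symm))
            (Nat.ne_of_lt hi)
      have h2 : ∀ i, i < N → ∀ j, j < N → c i = c j → i = j := fun i hi j hj he =>
        hinj i (Nat.lt_succ_of_lt hi) j (Nat.lt_succ_of_lt hj) he
      have := ih c h1 h2
      rw [hcN]
      linarith
    · -- i0 < N
      set c' : ℕ → ℕ := fun i => if i = i0 then c N else c i with hc'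
      have hcNne : c N ≠ N := by
        intro h
        exact absurd (hinj N (Nat.lt_succ_self _) i0 (Nat.lt_succ_of_lt hlt0)
          (h.trans hci0.symm)) (Nat.ne_of_gt hlt0)
      have hcNlt : c N < N :=
        Nat.lt_of_le_of_ne (Nat.lt_succ_iff.1 (hlt N (Nat.lt_succ_self _))) hcNne
      have h1 : ∀ i, i < N → c' i < N := by
        intro i hi
        by_cases h : i = i0
        · simp [hc', h, hcNlt]
        · simp only [hc', if_neg h]
          have := hlt i (Nat.lt_succ_of_lt hi)
          rcases Nat.lt_succ_iff_lt_or_eq.1 this with h' | h'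
          · exact h'
          · exact absurd (hinj i (Nat.lt_succ_of_lt hi) i0 (Nat.lt_succ_of_lt hlt0)
              (h'.trans hci0.symm)) h
      have h2 : ∀ i, i < N → ∀ j, j < N → c' i = c' j → i = j := by
        intro i hi j hj he
        by_cases h : i = i0 <;> by_cases h' : j = i0
        · exact h.trans h'.symm
        · simp only [hc', if_pos h, if_neg h'] at he
          exact absurd (hinj N (Nat.lt_succ_self _) j (Nat.lt_succ_of_lt hj) he).symm
            (Nat.ne_of_lt hj)
        · simp only [hc', if_neg h, if_pos h'] at he
          exact absurd (hinj i (Nat.lt_succ_of_lt hi) N (Nat.lt_succ_self _) he)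
            (Nat.ne_of_lt hi)
        · simp only [hc', if_neg h, if_neg h'] at he
          exact hinj i (Nat.lt_succ_of_lt hi) j (Nat.lt_succ_of_lt hj) he
      have IH := ih c' h1 h2
      have hi0r : i0 ∈ Finset.range N := Finset.mem_range.2 hlt0
      have e1 : ∑ i ∈ Finset.range N, w i * (c' i : ℝ)
          = w i0 * (c N : ℝ) + ∑ i ∈ (Finset.range N).erase i0, w i * (c i : ℝ) := by
        rw [← Finset.add_sum_erase _ _ hi0r]
        congr 1
        · simp [hc']
        · apply Finset.sum_congr rfl
          intro x hx
          have : x ≠ i0 := Finset.ne_of_mem_erase hx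
          simp [hc', this]
      have e2 : ∑ i ∈ Finset.range N, w i * (c i : ℝ)
          = w i0 * (N : ℝ) + ∑ i ∈ (Finset.range N).erase i0, w i * (c i : ℝ) := by
        rw [← Finset.add_sum_erase _ _ hi0r, hci0]
      have hwN : w N ≤ w i0 := hmono i0 N hi0le
      have hcNR : (c N : ℝ) ≤ (N : ℝ) := by exact_mod_cast hcNlt.le
      have hkey : w i0 * (c N : ℝ) + w N * N ≤ w i0 * N + w N * (c N : ℝ) := by nlinarith
      rw [hci0] at *
      linarith [IH, e1, e2]

/-- `glog i` is `⌊log₂ (i+1)⌋`. -/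
def glog (i : ℕ) : ℕ := Nat.findGreatest (fun m => 2 ^ m ≤ i + 1) (i + 1)

lemma glog_lb (i : ℕ) : 2 ^ glog i ≤ i + 1 := by
  unfold glog
  exact Nat.findGreatest_spec (P := fun m => 2 ^ m ≤ i + 1) (m := 0) (Nat.zero_le _) (by simp)

lemma glog_le (i : ℕ) : glog i ≤ i := by
  have h1 : glog i ≤ i + 1 := Nat.findGreatest_le _
  rcases Nat.lt_succ_iff_lt_or_eq.1 (Nat.lt_succ_of_le h1) with h | h
  · exact Nat.lt_succ_iff.1 h
  · exfalso
    have := glog_lb i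
    rw [h] at this
    exact absurd this (Nat.not_le.2 Nat.lt_two_pow_self)

lemma glog_ub (i : ℕ) : i + 2 ≤ 2 ^ (glog i + 1) := by
  by_contra h
  push_neg at h
  have hp : 2 ^ (glog i + 1) ≤ i + 1 := Nat.lt_succ_iff.1 (by omega)
  exact Nat.findGreatest_is_greatest (P := fun m => 2 ^ m ≤ i + 1) (n := i + 1)
    (Nat.lt_succ_self _) (Nat.succ_le_succ (glog_le i)) hp

lemma glog_primrec : Primrec glog := by
  have hpow : Primrec₂ ((· ^ ·) : ℕ → ℕ → ℕ) := Primrec₂.unpaired'.1 Nat.Primrec.pow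
  have hp : PrimrecRel (fun (i m : ℕ) => 2 ^ m ≤ i + 1) :=
    Primrec.nat_le.comp (hpow.comp (Primrec.const 2) Primrec.snd)
      (Primrec.succ.comp Primrec.fst)
  exact Primrec.nat_findGreatest (Primrec.succ) hp

lemma tele_sum (n : ℕ) :
    ∑ i ∈ Finset.range n, (1 / ((i : ℝ) + 1) - 1 / ((i : ℝ) + 2)) = 1 - 1 / ((n : ℝ) + 1) := by
  have h : ∀ i : ℕ, (1 / ((i : ℝ) + 1) - 1 / ((i : ℝ) + 2))
      = (fun k : ℕ => 1 / ((k : ℝ) + 1)) i - (fun k : ℕ => 1 / ((k : ℝ) + 1)) (i + 1) := by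
    intro i; push_cast; ring
  rw [Finset.sum_congr rfl (fun i _ => h i), Finset.sum_range_sub']
  norm_num

end Aux

/-- If `A` is an infinite c.e. set (the range of a computable
injection `f`), then `Σ_{x ∈ A} c̲_K(x) = ∞`: the finite partial sums over
subsets of `A` are unbounded.  Here `K` is prefix-free complexity, abstractly
given with the Kraft inequality and the Machine Existence (Kraft–Chaitin)
theorem as hypotheses. -/
theorem stmt6 (K : ℕ → ℕ)
    (hKraft : ∀ F : Finset ℕ, ∑ w ∈ F, ((2 : ℝ)⁻¹) ^ K w ≤ 1)
    (hKC : ∀ L : ℕ → ℕ × ℕ, Computable L →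
      (∀ F : Finset ℕ, ∑ i ∈ F, ((2 : ℝ)⁻¹) ^ (L i).1 ≤ 1) →
      ∃ d, ∀ i, K (L i).2 ≤ (L i).1 + d)
    (f : ℕ → ℕ) (hf : Computable f) (hinj : Function.Injective f) :
    ∀ q : ℝ, ∃ F : Finset ℕ, (∀ x ∈ F, x ∈ Set.range f) ∧
      q < ∑ x ∈ F, cKbar K x := by
  intro q
  classical
  have hpos : ∀ w : ℕ, (0 : ℝ) ≤ ((2 : ℝ)⁻¹) ^ K w := fun w => by positivity
  have hsumK : Summable (fun w => ((2 : ℝ)⁻¹) ^ K w) :=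
    summable_of_sum_range_le hpos (fun n => hKraft (Finset.range n))
  have hsum2 : ∀ x : ℕ, Summable (fun w => if x < w then ((2 : ℝ)⁻¹) ^ K w else 0) := by
    intro x
    refine Summable.of_nonneg_of_le (fun w => ?_) (fun w => ?_) hsumK
    · split_ifs with h; exacts [hpos w, le_rfl]
    · split_ifs with h; exacts [le_rfl, hpos w]
  -- finite lower bounds on `cKbar`
  have key : ∀ (x : ℕ) (t : Finset ℕ), (∀ w ∈ t, x < w) →
      ∑ w ∈ t, ((2 : ℝ)⁻¹) ^ K w ≤ cKbar K x := by
    intro x t ht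
    have e : ∑ w ∈ t, ((2 : ℝ)⁻¹) ^ K w
        = ∑ w ∈ t, (if x < w then ((2 : ℝ)⁻¹) ^ K w else 0) :=
      Finset.sum_congr rfl (fun w hw => (if_pos (ht w hw)).symm)
    rw [e, cKbar]
    refine Summable.sum_le_tsum t (fun w _ => ?_) (hsum2 x)
    split_ifs with h; exacts [hpos w, le_rfl]
  -- the requests
  set r : ℕ → ℕ := fun i => 2 * glog i + 3 with hr
  have hrP : Primrec r :=
    Primrec.nat_add.comp (Primrec.nat_mul.comp (Primrec.const 2) glog_primrec)
      (Primrec.const 3)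
  have hL : Computable (fun i => (r i, f i)) := Computable.pair hrP.to_comp hf
  have hterm : ∀ i : ℕ, ((2 : ℝ)⁻¹) ^ r i
      ≤ (1 / 2) * (1 / ((i : ℝ) + 1) - 1 / ((i : ℝ) + 2)) := by
    intro i
    have ha : ((i : ℝ) + 2) ≤ 2 * (2 : ℝ) ^ glog i := by
      have := glog_ub i
      have h2 : ((i : ℝ) + 2) ≤ ((2 : ℝ)) ^ (glog i + 1) := by exact_mod_cast this
      rw [pow_succ] at h2
      linarith
    have hi0 : (0 : ℝ) ≤ (i : ℝ) := Nat.cast_nonneg i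
    have hE : ((2 : ℝ)⁻¹) ^ r i = (8 * ((2 : ℝ) ^ glog i) ^ 2)⁻¹ := by
      rw [hr, inv_pow]
      congr 1
      rw [pow_add, mul_comm 2 (glog i), pow_mul]
      ring
    rw [hE]
    have hrhs : (1 / 2) * (1 / ((i : ℝ) + 1) - 1 / ((i : ℝ) + 2))
        = (2 * ((i : ℝ) + 1) * ((i : ℝ) + 2))⁻¹ := by
      field_simp
      ring
    rw [hrhs]
    have hb : (0 : ℝ) < 2 * ((i : ℝ) + 1) * ((i : ℝ) + 2) := by positivity
    apply inv_anti₀ hb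
    nlinarith [sq_nonneg ((2 : ℝ) ^ glog i)]
  have hKraftr : ∀ F : Finset ℕ, ∑ i ∈ F, ((2 : ℝ)⁻¹) ^ ((fun i => (r i, f i)) i).1 ≤ 1 := by
    intro F
    obtain ⟨n, hn⟩ := Finset.exists_nat_subset_range F
    calc ∑ i ∈ F, ((2 : ℝ)⁻¹) ^ r i
        ≤ ∑ i ∈ Finset.range n, ((2 : ℝ)⁻¹) ^ r i :=
          Finset.sum_le_sum_of_subset_of_nonneg hn (fun i _ _ => by positivity)
      _ ≤ ∑ i ∈ Finset.range n, (1 / 2) * (1 / ((i : ℝ) + 1) - 1 / ((i : ℝ) + 2)) :=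
          Finset.sum_le_sum (fun i _ => hterm i)
      _ = (1 / 2) * ∑ i ∈ Finset.range n, (1 / ((i : ℝ) + 1) - 1 / ((i : ℝ) + 2)) := by
          rw [Finset.mul_sum]
      _ = (1 / 2) * (1 - 1 / ((n : ℝ) + 1)) := by rw [tele_sum]
      _ ≤ 1 := by
          have : 0 ≤ 1 / ((n : ℝ) + 1) := by positivity
          linarith
  obtain ⟨d, hd⟩ := hKC (fun i => (r i, f i)) hL hKraftr
  simp only at hd
  -- hd : ∀ i, K (f i) ≤ r i + d
  set β : ℝ := ((2 : ℝ)⁻¹) ^ d / 8 with hβ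
  have hβpos : 0 < β := by rw [hβ]; positivity
  have hlow : ∀ i : ℕ, β * ((((i : ℝ) + 1) ^ 2)⁻¹) ≤ ((2 : ℝ)⁻¹) ^ K (f i) := by
    intro i
    have h1 : ((2 : ℝ)⁻¹) ^ (r i + d) ≤ ((2 : ℝ)⁻¹) ^ K (f i) :=
      pow_le_pow_of_le_one (by norm_num) (by norm_num) (hd i)
    refine le_trans ?_ h1
    have hE : ((2 : ℝ)⁻¹) ^ (r i + d) = β * ((((2 : ℝ) ^ glog i) ^ 2)⁻¹) := by
      rw [pow_add, hr, hβ, inv_pow]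
      have : ((2 : ℝ)) ^ (2 * glog i + 3) = 8 * ((2 : ℝ) ^ glog i) ^ 2 := by
        rw [pow_add, mul_comm 2 (glog i), pow_mul]; ring
      rw [this]
      field_simp
    rw [hE]
    have hgle : ((2 : ℝ) ^ glog i) ≤ (i : ℝ) + 1 := by exact_mod_cast glog_lb i
    have hgpos : (0 : ℝ) < (2 : ℝ) ^ glog i := by positivity
    have : (((i : ℝ) + 1) ^ 2)⁻¹ ≤ (((2 : ℝ) ^ glog i) ^ 2)⁻¹ := by
      apply inv_anti₀ (by positivity)
      nlinarith
    exact mul_le_mul_of_nonneg_left this hβpos.le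
  -- choose N with a large harmonic sum
  obtain ⟨N, hN⟩ :=
    (Real.tendsto_sum_range_one_div_nat_succ_atTop.eventually_ge_atTop (q / β + 3)).exists
  -- hN : q / β + 3 ≤ ∑ i ∈ range N, 1 / (i + 1)
  refine ⟨(Finset.range N).image f, ?_, ?_⟩
  · intro x hx
    obtain ⟨j, _, hj⟩ := Finset.mem_image.1 hx
    exact ⟨j, hj⟩
  rw [Finset.sum_image (fun a _ b _ h => hinj h)]
  set v : ℕ → ℝ := fun i => ((2 : ℝ)⁻¹) ^ K (f i) with hv
  set c : ℕ → ℕ := fun i => ((Finset.range N).filter (fun j => f j < f i)).card with hc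
  have step1 : ∀ j, ∑ i ∈ (Finset.range N).filter (fun i => f j < f i), v i ≤ cKbar K (f j) := by
    intro j
    have hmem : ∀ w ∈ ((Finset.range N).filter (fun i => f j < f i)).image f, f j < w := by
      intro w hw
      obtain ⟨i, hi, hiw⟩ := Finset.mem_image.1 hw
      have := (Finset.mem_filter.1 hi).2
      omega
    have := key (f j) (((Finset.range N).filter (fun i => f j < f i)).image f) hmem
    rwa [Finset.sum_image (fun a _ b _ h => hinj h)] at this
  have step2 : ∑ j ∈ Finset.range N, ∑ i ∈ (Finset.range N).filter (fun i => f j < f i), v i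
      = ∑ i ∈ Finset.range N, (c i : ℝ) * v i := by
    have e1 : ∀ j, ∑ i ∈ (Finset.range N).filter (fun i => f j < f i), v i
        = ∑ i ∈ Finset.range N, if f j < f i then v i else 0 := fun j =>
      Finset.sum_filter _ _
    rw [Finset.sum_congr rfl (fun j _ => e1 j), Finset.sum_comm]
    refine Finset.sum_congr rfl (fun i _ => ?_)
    rw [← Finset.sum_filter, Finset.sum_const, nsmul_eq_mul]
  have hclt : ∀ i, i < N → c i < N := by
    intro i hi
    have hsub : (Finset.range N).filter (fun j => f j < f i) ⊆ (Finset.range N).erase i := by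
      intro j hj
      rcases Finset.mem_filter.1 hj with ⟨hj1, hj2⟩
      refine Finset.mem_erase.2 ⟨?_, hj1⟩
      intro h; subst h; exact lt_irrefl _ hj2
    calc c i ≤ ((Finset.range N).erase i).card := Finset.card_le_card hsub
      _ = N - 1 := by rw [Finset.card_erase_of_mem (Finset.mem_range.2 hi), Finset.card_range]
      _ < N := by omega
  have hcinj : ∀ i, i < N → ∀ j, j < N → c i = c j → i = j := by
    intro i hi j hj he
    rcases lt_trichotomy (f i) (f j) with h | h | h
    · exfalso
      have hss : (Finset.range N).filter (fun k => f k < f i)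
          ⊂ (Finset.range N).filter (fun k => f k < f j) := by
        refine Finset.ssubset_iff_of_subset (fun k hk => ?_) |>.2 ?_
        · rcases Finset.mem_filter.1 hk with ⟨h1, h2⟩
          exact Finset.mem_filter.2 ⟨h1, h2.trans h⟩
        · exact ⟨i, Finset.mem_filter.2 ⟨Finset.mem_range.2 hi, h⟩,
            fun hk => lt_irrefl _ (Finset.mem_filter.1 hk).2⟩
      exact absurd he (Nat.ne_of_lt (Finset.card_lt_card hss))
    · exact hinj h
    · exfalso
      have hss : (Finset.range N).filter (fun k => f k < f j)
          ⊂ (Finset.range N).filter (fun k => f k < f i) := by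
        refine Finset.ssubset_iff_of_subset (fun k hk => ?_) |>.2 ?_
        · rcases Finset.mem_filter.1 hk with ⟨h1, h2⟩
          exact Finset.mem_filter.2 ⟨h1, h2.trans h⟩
        · exact ⟨j, Finset.mem_filter.2 ⟨Finset.mem_range.2 hj, h⟩,
            fun hk => lt_irrefl _ (Finset.mem_filter.1 hk).2⟩
      exact absurd he.symm (Nat.ne_of_lt (Finset.card_lt_card hss))
  have hre := rearrange_min (fun i => β * ((((i : ℝ) + 1) ^ 2)⁻¹))
    (fun i j hij => by
      have h1 : ((i : ℝ) + 1) ^ 2 ≤ ((j : ℝ) + 1) ^ 2 := by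
        have : (i : ℝ) ≤ (j : ℝ) := Nat.cast_le.2 hij
        nlinarith
      have := inv_anti₀ (by positivity : (0:ℝ) < ((i : ℝ) + 1) ^ 2) h1
      exact mul_le_mul_of_nonneg_left this hβpos.le)
    N c hclt hcinj
  -- final chain
  have chain1 : ∑ j ∈ Finset.range N, cKbar K (f j)
      ≥ ∑ i ∈ Finset.range N, (c i : ℝ) * v i := by
    rw [← step2]
    exact Finset.sum_le_sum (fun j _ => step1 j)
  have chain2 : ∑ i ∈ Finset.range N, (c i : ℝ) * v i
      ≥ ∑ i ∈ Finset.range N, (β * ((((i : ℝ) + 1) ^ 2)⁻¹)) * (c i : ℝ) := by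
    refine Finset.sum_le_sum (fun i _ => ?_)
    rw [mul_comm ((β * ((((i : ℝ) + 1) ^ 2)⁻¹))) ((c i : ℝ))]
    exact mul_le_mul_of_nonneg_left (hlow i) (Nat.cast_nonneg _)
  have chain3 : ∑ i ∈ Finset.range N, (β * ((((i : ℝ) + 1) ^ 2)⁻¹)) * ((i : ℕ) : ℝ)
      ≥ β * (q / β + 1) := by
    have hpt : ∀ i : ℕ, β * (1 / ((i : ℝ) + 1) - 2 * (1 / ((i : ℝ) + 1) - 1 / ((i : ℝ) + 2)))
        ≤ (β * ((((i : ℝ) + 1) ^ 2)⁻¹)) * ((i : ℕ) : ℝ) := by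
      intro i
      have hx : (0 : ℝ) ≤ (i : ℝ) := Nat.cast_nonneg i
      have hdiff : (((i : ℝ) + 1) ^ 2)⁻¹ * (i : ℝ)
          - (1 / ((i : ℝ) + 1) - 2 * (1 / ((i : ℝ) + 1) - 1 / ((i : ℝ) + 2)))
          = (i : ℝ) / (((i : ℝ) + 1) ^ 2 * ((i : ℝ) + 2)) := by
        field_simp
        ring
      have hnn : (0 : ℝ) ≤ (i : ℝ) / (((i : ℝ) + 1) ^ 2 * ((i : ℝ) + 2)) := by positivity
      have h2 : (1 / ((i : ℝ) + 1) - 2 * (1 / ((i : ℝ) + 1) - 1 / ((i : ℝ) + 2)))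
          ≤ (((i : ℝ) + 1) ^ 2)⁻¹ * (i : ℝ) := by linarith
      calc β * (1 / ((i : ℝ) + 1) - 2 * (1 / ((i : ℝ) + 1) - 1 / ((i : ℝ) + 2)))
          ≤ β * ((((i : ℝ) + 1) ^ 2)⁻¹ * (i : ℝ)) :=
            mul_le_mul_of_nonneg_left h2 hβpos.le
        _ = (β * ((((i : ℝ) + 1) ^ 2)⁻¹)) * ((i : ℕ) : ℝ) := by ring
    have hsum : ∑ i ∈ Finset.range N,
        β * (1 / ((i : ℝ) + 1) - 2 * (1 / ((i : ℝ) + 1) - 1 / ((i : ℝ) + 2)))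
        = β * ((∑ i ∈ Finset.range N, 1 / ((i : ℝ) + 1))
            - 2 * (1 - 1 / ((N : ℝ) + 1))) := by
      rw [← Finset.mul_sum]
      congr 1
      rw [Finset.sum_sub_distrib, ← Finset.mul_sum, tele_sum]
    have hH : q / β + 3 ≤ ∑ i ∈ Finset.range N, 1 / ((i : ℝ) + 1) := hN
    have h1N : 0 ≤ 1 / ((N : ℝ) + 1) := by positivity
    calc β * (q / β + 1)
        ≤ β * ((∑ i ∈ Finset.range N, 1 / ((i : ℝ) + 1)) - 2 * (1 - 1 / ((N : ℝ) + 1))) := by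
          apply mul_le_mul_of_nonneg_left _ hβpos.le
          linarith
      _ = ∑ i ∈ Finset.range N,
            β * (1 / ((i : ℝ) + 1) - 2 * (1 / ((i : ℝ) + 1) - 1 / ((i : ℝ) + 2))) := hsum.symm
      _ ≤ ∑ i ∈ Finset.range N, (β * ((((i : ℝ) + 1) ^ 2)⁻¹)) * ((i : ℕ) : ℝ) :=
          Finset.sum_le_sum (fun i _ => hpt i)
  have hfin : β * (q / β + 1) = q + β := by
    field_simp
  linarith [chain1, chain2, chain3, hre]
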